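/- Let Q be a dyadic Carleson square and let {Q_j} be a finite or countable collection of pairwise disjoint dyadic Carleson squares contained in Q satisfying Σ_j ℓ(Q_j) ≤ (1/2)·ℓ(Q). Let R = Q ∖ ⋃_j closure(Q_j). Then the one-dimensional Hausdorff (arclength) measure of ∂R ∩ 𝔻 is at most 17·ℓ(Q). -/

import Mathlib

open Complex Metric Set MeasureTheory

/-- The open unit disk in the complex plane. -/
def unitDisk : Set ℂ := Metric.ball 0 1

/-- The dyadic Carleson square `Q_{n,j}`, for `n ≥ 1` and `0 ≤ j < 2^n`. -/
noncomputable def dyadicSquare (n j : ℕ) : Set ℂ :=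
  {z | ∃ r θ : ℝ, 1 - (2:ℝ) ^ (-(n:ℤ)) < r ∧ r < 1 ∧
    2 * Real.pi * j * (2:ℝ) ^ (-(n:ℤ)) < θ ∧ θ < 2 * Real.pi * (j + 1) * (2:ℝ) ^ (-(n:ℤ)) ∧
    z = r * Complex.exp (θ * Complex.I)}

open scoped NNReal ENNReal

lemma len_le_half (m : ℕ) (hm : 1 ≤ m) : (2:ℝ) ^ (-(m:ℤ)) ≤ 1/2 := by
  have : (-(m:ℤ)) ≤ -1 := by omega
  calc (2:ℝ) ^ (-(m:ℤ)) ≤ (2:ℝ) ^ (-1:ℤ) := by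
        apply zpow_le_zpow_right₀ (by norm_num) this
    _ = 1/2 := by norm_num

lemma abs_lower (m k : ℕ) (hm : 1 ≤ m) :
    closure (dyadicSquare m k) ⊆ {w : ℂ | 1 - (2:ℝ) ^ (-(m:ℤ)) ≤ ‖w‖} := by
  apply closure_minimal
  · rintro z ⟨r, θ, h1, h2, h3, h4, rfl⟩
    have hl := len_le_half m hm
    have hr0 : 0 < r := by linarith
    simp only [mem_setOf_eq, norm_mul, Complex.norm_real, Real.norm_eq_abs, Complex.norm_exp]
    rw [_root_.abs_of_pos hr0]
    have h0 : ((θ:ℂ) * Complex.I).re = 0 := by simp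
    rw [h0, Real.exp_zero, mul_one]
    linarith
  · exact isClosed_Ici.preimage continuous_norm

lemma frontier_biUnion_subset (S : Set (ℕ × ℕ)) (hvalid : ∀ p ∈ S, 1 ≤ p.1 ∧ p.2 < 2 ^ p.1)
    (hne : (∑' p : S, ENNReal.ofReal ((2:ℝ) ^ (-(p.1.1:ℤ)))) ≠ ⊤) :
    frontier (⋃ p ∈ S, closure (dyadicSquare p.1 p.2)) ∩ unitDisk
      ⊆ ⋃ p ∈ S, frontier (closure (dyadicSquare p.1 p.2)) := by
  set U := ⋃ p ∈ S, closure (dyadicSquare p.1 p.2) with hU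
  rintro z ⟨hzf, hzD⟩
  have hzabs : ‖z‖ < 1 := by simpa [unitDisk, Complex.dist_eq] using hzD
  set ε : ℝ := 1 - ‖z‖ with hε
  have hε0 : 0 < ε := by simp only [hε]; linarith
  set A : Set ↥S := {i : ↥S | ENNReal.ofReal (ε/2) ≤ ENNReal.ofReal ((2:ℝ) ^ (-(i.1.1:ℤ)))}
    with hA
  have hfin : A.Finite :=
    ENNReal.finite_const_le_of_tsum_ne_top hne
      (by simp only [ne_eq, ENNReal.ofReal_eq_zero, not_le]; linarith)
  have hcover : U ∩ ball z (ε/2) ⊆ ⋃ i ∈ A, closure (dyadicSquare i.1.1 i.1.2) := by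
    rintro w ⟨hwU, hwb⟩
    rw [hU, mem_iUnion₂] at hwU
    obtain ⟨p, hpS, hwp⟩ := hwU
    have h1p := (hvalid p hpS).1
    have hwabs : 1 - (2:ℝ) ^ (-(p.1:ℤ)) ≤ ‖w‖ := abs_lower p.1 p.2 h1p hwp
    have hdist : ‖w - z‖ < ε/2 := by
      have := mem_ball.mp hwb
      rwa [Complex.dist_eq] at this
    have habs2 : ‖w‖ < ‖z‖ + ε/2 := by
      calc ‖w‖ = ‖z + (w - z)‖ := by ring_nf
        _ ≤ ‖z‖ + ‖w - z‖ := norm_add_le _ _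
        _ < ‖z‖ + ε/2 := by linarith
    have hkey : ε/2 ≤ (2:ℝ) ^ (-(p.1:ℤ)) := by
      by_contra hcon
      push_neg at hcon
      simp only [hε] at habs2 hwabs
      linarith
    exact mem_iUnion₂.mpr ⟨⟨p, hpS⟩, ENNReal.ofReal_le_ofReal hkey, hwp⟩
  have hzcl : z ∈ closure (⋃ i ∈ A, closure (dyadicSquare i.1.1 i.1.2)) := by
    rw [_root_.mem_closure_iff]
    intro o ho hzo
    have hz2 : z ∈ closure U := frontier_subset_closure hzf
    obtain ⟨w, ⟨hwo, hwb⟩, hwU⟩ := _root_.mem_closure_iff.mp hz2 (o ∩ ball z (ε/2))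
      (ho.inter isOpen_ball) ⟨hzo, mem_ball_self (by linarith)⟩
    exact ⟨w, hwo, hcover ⟨hwU, hwb⟩⟩
  have hclosed : IsClosed (⋃ i ∈ A, closure (dyadicSquare i.1.1 i.1.2)) :=
    hfin.isClosed_biUnion (fun i _ => isClosed_closure)
  rw [hclosed.closure_eq] at hzcl
  obtain ⟨i, _, hzi⟩ := mem_iUnion₂.mp hzcl
  have hzint : z ∉ interior U := hzf.2
  have hnint : z ∉ interior (closure (dyadicSquare i.1.1 i.1.2)) := fun h =>
    hzint (interior_mono (subset_biUnion_of_mem (u := fun p : ℕ × ℕ =>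
      closure (dyadicSquare p.1 p.2)) i.2) h)
  refine mem_iUnion₂.mpr ⟨i.1, i.2, ?_⟩
  rw [isClosed_closure.frontier_eq]
  exact ⟨hzi, hnint⟩

lemma isOpen_dyadicSquare (m k : ℕ) (hm : 1 ≤ m) : IsOpen (dyadicSquare m k) := by
  set l : ℝ := (2:ℝ) ^ (-(m:ℤ)) with hl
  have hl0 : 0 < l := by positivity
  have hlh : l ≤ 1/2 := len_le_half m hm
  set θ₀ : ℝ := 2 * Real.pi * k * l + Real.pi * l with hθ₀
  have hpi := Real.pi_pos
  have key : dyadicSquare m k =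
      (fun z => Complex.exp ((θ₀ : ℂ) * Complex.I) * z) ''
        (Complex.polarCoord.symm '' (Ioo (1-l) 1 ×ˢ Ioo (-(Real.pi*l)) (Real.pi*l))) := by
    ext z
    simp only [dyadicSquare, mem_setOf_eq, mem_image, Prod.exists, mem_prod, mem_Ioo,
      Complex.polarCoord_symm_apply]
    constructor
    · rintro ⟨r, θ, h1, h2, h3, h4, rfl⟩
      refine ⟨(r : ℂ) * (Real.cos (θ - θ₀) + Real.sin (θ - θ₀) * Complex.I),
        ⟨r, θ - θ₀, ⟨⟨h1, h2⟩, by constructor <;> [skip; skip] <;> push_cast <;> nlinarith⟩, rfl⟩, ?_⟩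
      rw [Complex.ofReal_cos, Complex.ofReal_sin, ← Complex.exp_mul_I]
      rw [mul_comm (Complex.exp _), mul_assoc, ← Complex.exp_add, ← add_mul]
      norm_num
    · rintro ⟨w, ⟨r, φ, ⟨⟨h1, h2⟩, h3, h4⟩, rfl⟩, rfl⟩
      refine ⟨r, φ + θ₀, h1, h2, by nlinarith, by push_cast; nlinarith, ?_⟩
      rw [Complex.ofReal_cos, Complex.ofReal_sin, ← Complex.exp_mul_I]
      rw [mul_comm (Complex.exp _), mul_assoc, ← Complex.exp_add, ← add_mul]
      push_cast
      ring_nf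
  rw [key]
  have h1 : IsOpen (Complex.polarCoord.symm ''
      (Ioo (1-l) 1 ×ˢ Ioo (-(Real.pi*l)) (Real.pi*l))) := by
    apply Complex.polarCoord.symm.isOpen_image_of_subset_source
      (isOpen_Ioo.prod isOpen_Ioo)
    rw [OpenPartialHomeomorph.symm_source, Complex.polarCoord_target]
    rintro ⟨r, φ⟩ ⟨⟨hr1, hr2⟩, hφ1, hφ2⟩
    constructor
    · simp only [mem_Ioi]; dsimp at hr1 ⊢; linarith
    · simp only [mem_Ioo]; dsimp at hφ1 hφ2 ⊢; constructor <;> nlinarith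
  have hc : Complex.exp ((θ₀ : ℂ) * Complex.I) ≠ 0 := Complex.exp_ne_zero _
  exact (Homeomorph.mulLeft₀ _ hc).isOpen_image.2 h1

lemma sq_bound (m k : ℕ) (hm : 1 ≤ m) :
    (μH[1] : Measure ℂ) ((closure (dyadicSquare m k) \ dyadicSquare m k) ∩ unitDisk)
      ≤ ENNReal.ofReal ((2 + 2 * Real.pi) * (2:ℝ) ^ (-(m:ℤ))) := by
  set l : ℝ := (2:ℝ) ^ (-(m:ℤ)) with hl
  have hl0 : 0 < l := by positivity
  have hlh : l ≤ 1/2 := len_le_half m hm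
  have hpi := Real.pi_pos
  set a : ℝ := 2 * Real.pi * k * l with ha
  set b : ℝ := 2 * Real.pi * (k + 1) * l with hb
  have hab : a ≤ b := by nlinarith
  -- the closed sector
  set f : ℝ × ℝ → ℂ := fun p => (p.1 : ℂ) * Complex.exp ((p.2 : ℂ) * Complex.I) with hf
  have hfc : Continuous f := by fun_prop
  set K : Set ℂ := f '' (Icc (1-l) 1 ×ˢ Icc a b) with hK
  have hKcl : IsClosed K :=
    (((isCompact_Icc).prod isCompact_Icc).image hfc).isClosed
  have hQK : dyadicSquare m k ⊆ K := by
    rintro z ⟨r, θ, h1, h2, h3, h4, rfl⟩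
    exact ⟨(r, θ), ⟨⟨le_of_lt h1, le_of_lt h2⟩, le_of_lt h3, le_of_lt h4⟩, rfl⟩
  have hclQK : closure (dyadicSquare m k) ⊆ K := closure_minimal hQK hKcl
  -- the three pieces
  set sideA : Set ℂ := (fun r : ℝ => (r:ℂ) * Complex.exp ((a:ℂ) * Complex.I)) '' Icc (1-l) 1
  set sideB : Set ℂ := (fun r : ℝ => (r:ℂ) * Complex.exp ((b:ℂ) * Complex.I)) '' Icc (1-l) 1
  set arc : Set ℂ := circleMap 0 (1-l) '' Icc a b with harc
  have hsub : (closure (dyadicSquare m k) \ dyadicSquare m k) ∩ unitDisk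
      ⊆ sideA ∪ sideB ∪ arc := by
    rintro z ⟨⟨hzK, hzQ⟩, hzD⟩
    obtain ⟨⟨r, θ⟩, ⟨⟨hr1, hr2⟩, hθ1, hθ2⟩, rfl⟩ := hclQK hzK
    have hr0 : 0 < r := by linarith
    have habs : ‖f (r, θ)‖ = r := by
      simp [hf, abs_of_pos hr0]
    have hzlt : r < 1 := by
      have : ‖f (r, θ)‖ < 1 := by
        simpa [unitDisk, Complex.dist_eq] using hzD
      rwa [habs] at this
    have hnot : ¬ (1 - l < r ∧ a < θ ∧ θ < b) := by
      intro ⟨u1, u2, u3⟩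
      exact hzQ ⟨r, θ, u1, hzlt, u2, u3, rfl⟩
    push_neg at hnot
    rcases lt_or_eq_of_le hr1 with h | h
    · rcases lt_or_eq_of_le hθ1 with h' | h'
      · rcases lt_or_eq_of_le hθ2 with h'' | h''
        · exact absurd (hnot h h') (not_le.mpr h'')
        · refine Or.inl (Or.inr ⟨r, ⟨hr1, le_of_lt hzlt⟩, ?_⟩)
          simp [hf, show θ = b from h'']
      · refine Or.inl (Or.inl ⟨r, ⟨hr1, le_of_lt hzlt⟩, ?_⟩)
        simp [hf, show θ = a from h'.symm]
    · refine Or.inr ⟨θ, ⟨hθ1, hθ2⟩, ?_⟩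
      simp [circleMap, hf, show r = 1 - l from h.symm]
  calc (μH[1] : Measure ℂ) ((closure (dyadicSquare m k) \ dyadicSquare m k) ∩ unitDisk)
      ≤ μH[1] (sideA ∪ sideB ∪ arc) := measure_mono hsub
    _ ≤ μH[1] (sideA ∪ sideB) + μH[1] arc := measure_union_le _ _
    _ ≤ (μH[1] sideA + μH[1] sideB) + μH[1] arc := by
        gcongr; exact measure_union_le _ _
    _ ≤ (ENNReal.ofReal l + ENNReal.ofReal l) + ENNReal.ofReal (2 * Real.pi * l) := by
        have hside : ∀ c : ℝ, (μH[1] : Measure ℂ)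
            ((fun r : ℝ => (r:ℂ) * Complex.exp ((c:ℂ) * Complex.I)) '' Icc (1-l) 1)
            ≤ ENNReal.ofReal l := by
          intro c
          have hlip : LipschitzWith 1 (fun r : ℝ => (r:ℂ) * Complex.exp ((c:ℂ) * Complex.I)) := by
            apply LipschitzWith.of_dist_le_mul
            intro x y
            rw [Complex.dist_eq, Real.dist_eq, ← sub_mul, norm_mul, Complex.norm_exp,
              ← Complex.ofReal_sub, Complex.norm_real]
            simp
          refine le_trans (hlip.hausdorffMeasure_image_le zero_le_one (Icc (1-l) 1)) ?_
          rw [MeasureTheory.hausdorffMeasure_real, Real.volume_Icc]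
          simp only [ENNReal.coe_one, ENNReal.one_rpow, one_mul]
          norm_num
        have harcb : (μH[1] : Measure ℂ) arc ≤ ENNReal.ofReal (2 * Real.pi * l) := by
          have h1 : (μH[1] : Measure ℂ) arc
              ≤ ((Real.nnabs (1-l) : ℝ≥0∞)) ^ (1:ℝ) * μH[1] (Icc a b) :=
            (lipschitzWith_circleMap 0 (1-l)).hausdorffMeasure_image_le zero_le_one _
          have h2 : ((Real.nnabs (1-l) : ℝ≥0∞)) ^ (1:ℝ) ≤ 1 := by
            rw [ENNReal.rpow_one]
            have h3 : Real.nnabs (1-l) ≤ 1 := by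
              rw [← NNReal.coe_le_coe, Real.coe_nnabs,
                _root_.abs_of_nonneg (by linarith : (0:ℝ) ≤ 1 - l)]
              push_cast; linarith
            exact_mod_cast h3
          calc (μH[1] : Measure ℂ) arc ≤ 1 * μH[1] (Icc a b) :=
                le_trans h1 (by gcongr)
            _ = ENNReal.ofReal (b - a) := by
                rw [one_mul, MeasureTheory.hausdorffMeasure_real, Real.volume_Icc]
            _ = ENNReal.ofReal (2 * Real.pi * l) := by
                congr 1; rw [hb, ha]; ring
        gcongr
        · exact hside a
        · exact hside b
    _ ≤ ENNReal.ofReal ((2 + 2 * Real.pi) * l) := by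
        rw [← ENNReal.ofReal_add (by positivity) (by positivity),
          ← ENNReal.ofReal_add (by positivity) (by positivity)]
        apply ENNReal.ofReal_le_ofReal
        nlinarith

/-- Let `Q` be a dyadic Carleson square and `{Q_p}_{p ∈ S}` pairwise disjoint dyadic
Carleson squares contained in `Q` with `Σ ℓ(Q_p) ≤ ℓ(Q)/2`. If
`R = Q ∖ ⋃ closure(Q_p)`, then the arclength of `∂R ∩ 𝔻` is at most `17 ℓ(Q)`. -/
theorem frontier_length_bound (n j : ℕ) (hn : 1 ≤ n) (hj : j < 2 ^ n)
    (S : Set (ℕ × ℕ)) (hvalid : ∀ p ∈ S, 1 ≤ p.1 ∧ p.2 < 2 ^ p.1)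
    (hsub : ∀ p ∈ S, dyadicSquare p.1 p.2 ⊆ dyadicSquare n j)
    (hdisj : S.Pairwise fun p q => Disjoint (dyadicSquare p.1 p.2) (dyadicSquare q.1 q.2))
    (hsum : ∑' p : S, ENNReal.ofReal ((2:ℝ) ^ (-(p.1.1:ℤ)))
      ≤ ENNReal.ofReal ((2:ℝ) ^ (-(n:ℤ)) / 2)) :
    (μH[1] : Measure ℂ)
        (frontier (dyadicSquare n j \ ⋃ p ∈ S, closure (dyadicSquare p.1 p.2)) ∩ unitDisk)
      ≤ ENNReal.ofReal (17 * (2:ℝ) ^ (-(n:ℤ))) := by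
  set l : ℝ := (2:ℝ) ^ (-(n:ℤ)) with hl
  have hl0 : 0 < l := by positivity
  have hpi := Real.pi_pos
  set U := ⋃ p ∈ S, closure (dyadicSquare p.1 p.2) with hU
  have hQopen := isOpen_dyadicSquare n j hn
  have hne : (∑' p : S, ENNReal.ofReal ((2:ℝ) ^ (-(p.1.1:ℤ)))) ≠ ⊤ :=
    ne_top_of_le_ne_top ENNReal.ofReal_ne_top hsum
  have h0 : frontier (dyadicSquare n j \ U) ⊆ frontier (dyadicSquare n j) ∪ frontier U := by
    rw [diff_eq]
    refine (frontier_inter_subset _ _).trans ?_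
    rw [frontier_compl]
    exact union_subset_union inter_subset_left inter_subset_right
  have hsplit : frontier (dyadicSquare n j \ U) ∩ unitDisk
      ⊆ ((closure (dyadicSquare n j) \ dyadicSquare n j) ∩ unitDisk)
        ∪ ⋃ p ∈ S, ((closure (dyadicSquare p.1 p.2) \ dyadicSquare p.1 p.2) ∩ unitDisk) := by
    rintro z ⟨hz, hzD⟩
    rcases h0 hz with h | h
    · left
      rw [hQopen.frontier_eq] at h
      exact ⟨h, hzD⟩
    · right
      obtain ⟨p, hpS, hzp⟩ := mem_iUnion₂.mp (frontier_biUnion_subset S hvalid hne ⟨h, hzD⟩)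
      refine mem_iUnion₂.mpr ⟨p, hpS, ?_, hzD⟩
      rw [isClosed_closure.frontier_eq] at hzp
      have hopen := isOpen_dyadicSquare p.1 p.2 (hvalid p hpS).1
      have hsubint : dyadicSquare p.1 p.2 ⊆ interior (closure (dyadicSquare p.1 p.2)) :=
        hopen.subset_interior_iff.mpr subset_closure
      exact ⟨hzp.1, fun hq => hzp.2 (hsubint hq)⟩
  refine le_trans (measure_mono hsplit) ?_
  refine le_trans (measure_union_le _ _) ?_
  have hbig := sq_bound n j hn
  have hUnionle : (μH[1] : Measure ℂ)
      (⋃ p ∈ S, ((closure (dyadicSquare p.1 p.2) \ dyadicSquare p.1 p.2) ∩ unitDisk))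
      ≤ ∑' p : S, (μH[1] : Measure ℂ)
          ((closure (dyadicSquare p.1.1 p.1.2) \ dyadicSquare p.1.1 p.1.2) ∩ unitDisk) :=
    measure_biUnion_le _ (S.to_countable) _
  have hsum2 : (∑' p : S, (μH[1] : Measure ℂ)
        ((closure (dyadicSquare p.1.1 p.1.2) \ dyadicSquare p.1.1 p.1.2) ∩ unitDisk))
      ≤ ENNReal.ofReal (2 + 2 * Real.pi) * ENNReal.ofReal (l / 2) := by
    calc (∑' p : S, (μH[1] : Measure ℂ)
          ((closure (dyadicSquare p.1.1 p.1.2) \ dyadicSquare p.1.1 p.1.2) ∩ unitDisk))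
        ≤ ∑' p : S, ENNReal.ofReal ((2 + 2 * Real.pi) * (2:ℝ) ^ (-(p.1.1:ℤ))) :=
          ENNReal.tsum_le_tsum (fun p => sq_bound p.1.1 p.1.2 (hvalid p.1 p.2).1)
      _ = ∑' p : S, ENNReal.ofReal (2 + 2 * Real.pi)
            * ENNReal.ofReal ((2:ℝ) ^ (-(p.1.1:ℤ))) := by
          congr 1
          funext p
          rw [ENNReal.ofReal_mul (by positivity)]
      _ = ENNReal.ofReal (2 + 2 * Real.pi)
            * ∑' p : S, ENNReal.ofReal ((2:ℝ) ^ (-(p.1.1:ℤ))) := ENNReal.tsum_mul_left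
      _ ≤ ENNReal.ofReal (2 + 2 * Real.pi) * ENNReal.ofReal (l / 2) :=
          mul_le_mul_right hsum _
  calc (μH[1] : Measure ℂ) ((closure (dyadicSquare n j) \ dyadicSquare n j) ∩ unitDisk)
        + (μH[1] : Measure ℂ)
          (⋃ p ∈ S, ((closure (dyadicSquare p.1 p.2) \ dyadicSquare p.1 p.2) ∩ unitDisk))
      ≤ ENNReal.ofReal ((2 + 2 * Real.pi) * l)
          + ENNReal.ofReal (2 + 2 * Real.pi) * ENNReal.ofReal (l / 2) :=
        add_le_add hbig (hUnionle.trans hsum2)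
    _ = ENNReal.ofReal ((2 + 2 * Real.pi) * l + (2 + 2 * Real.pi) * (l / 2)) := by
        rw [← ENNReal.ofReal_mul (by positivity),
          ← ENNReal.ofReal_add (by positivity) (by positivity)]
    _ ≤ ENNReal.ofReal (17 * l) := by
        apply ENNReal.ofReal_le_ofReal
        nlinarith [Real.pi_le_four, hl0.le,
          mul_le_mul_of_nonneg_right Real.pi_le_four hl0.le]
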